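/- Let p_i, p_j, p_k, p_l be points in ℝ^d and let w_j, w_k, w_l be nonzero reals such that w_j(p_i - p_j) + w_k(p_i - p_k) + w_l(p_i - p_l) = 0. Then the point q := (w_j/(w_j + w_k)) • p_j + (w_k/(w_j + w_k)) • p_k (assuming w_j + w_k ≠ 0) lies on the affine line through p_i and p_l. -/
import Mathlib

/-- At a trivalent vertex in equilibrium, the explicit affine combination
`(w_j/(w_j+w_k)) • p_j + (w_k/(w_j+w_k)) • p_k` lies on the line through `p_i` and `p_l`. -/
theorem stmt_0 (d : ℕ) (pi pj pk pl : Fin d → ℝ) (wj wk wl : ℝ)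
    (hwj : wj ≠ 0) (hwk : wk ≠ 0) (hwl : wl ≠ 0) (hsum : wj + wk ≠ 0)
    (heq : wj • (pi - pj) + wk • (pi - pk) + wl • (pi - pl) = 0) :
    ∃ t : ℝ, (wj / (wj + wk)) • pj + (wk / (wj + wk)) • pk = pi + t • (pl - pi) := by
  refine ⟨-wl / (wj + wk), ?_⟩
  funext x
  have h := congrFun heq x
  simp only [Pi.add_apply, Pi.smul_apply, Pi.sub_apply, Pi.zero_apply, smul_eq_mul] at h ⊢
  field_simp
  linarith [h]
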